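/- If a Q-function estimate Q̂ satisfies the Bellman equation for π exactly on a subset D ⊆ S × A that is closed under the transition-plus-policy dynamics (i.e., for every (s,a) ∈ D, every s' with T(s,a)(s') > 0 and every a' with π(a'|s') > 0 satisfies (s',a') ∈ D), then Q̂ = Q^π on D. -/
import Mathlib


open Finset

/-- If `Q̂` satisfies the Bellman equation for `π` exactly on a set `D` of state-action
pairs that is closed under the transition-plus-policy dynamics, then `Q̂` agrees with
the true action-value `Q^π` on `D`. -/
theorem bellman_exact_on_closed_set {S A : Type*} [Fintype S] [Fintype A]
    (R : S → A → ℝ) (T : S → A → S → ℝ) (γ : ℝ) (π : S → A → ℝ)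
    (hγ0 : 0 ≤ γ) (hγ1 : γ < 1)
    (hT0 : ∀ s a s', 0 ≤ T s a s')
    (hT1 : ∀ s a, ∑ s' : S, T s a s' = 1)
    (hπ0 : ∀ s a, 0 ≤ π s a)
    (hπ1 : ∀ s, ∑ a : A, π s a = 1)
    (Qpi Qhat : S × A → ℝ)
    (hQpi : ∀ s a, Qpi (s, a) =
      R s a + γ * ∑ s' : S, T s a s' * ∑ a' : A, π s' a' * Qpi (s', a'))
    (D : Set (S × A))
    (hclosed : ∀ p ∈ D, ∀ (s' : S) (a' : A),
      0 < T p.1 p.2 s' → 0 < π s' a' → (s', a') ∈ D)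
    (hQhat : ∀ p ∈ D, Qhat p =
      R p.1 p.2 + γ * ∑ s' : S, T p.1 p.2 s' * ∑ a' : A, π s' a' * Qhat (s', a')) :
    ∀ p ∈ D, Qhat p = Qpi p := by
  classical
  intro p hp
  set e : S × A → ℝ := fun q => |Qhat q - Qpi q| with he
  obtain ⟨m, hmD, hm⟩ := Finset.exists_max_image (Set.toFinset D) e
    ⟨p, Set.mem_toFinset.mpr hp⟩
  rw [Set.mem_toFinset] at hmD
  set M := e m with hMdef
  have hM0 : 0 ≤ M := abs_nonneg _
  have key : ∀ q ∈ D, e q ≤ γ * M := by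
    intro q hq
    have h1 := hQhat q hq
    have h2 : Qpi q = R q.1 q.2 + γ * ∑ s' : S, T q.1 q.2 s' *
        ∑ a' : A, π s' a' * Qpi (s', a') := by
      have := hQpi q.1 q.2
      simpa using this
    have hdiff : Qhat q - Qpi q = γ * ∑ s' : S, T q.1 q.2 s' *
        ∑ a' : A, π s' a' * (Qhat (s', a') - Qpi (s', a')) := by
      have inner : ∀ s' : S, ∑ a' : A, π s' a' * (Qhat (s', a') - Qpi (s', a')) =
          (∑ a' : A, π s' a' * Qhat (s', a')) - ∑ a' : A, π s' a' * Qpi (s', a') := by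
        intro s'
        rw [← Finset.sum_sub_distrib]
        exact Finset.sum_congr rfl (fun a' _ => by ring)
      rw [h1, h2]
      simp only [inner, mul_sub, Finset.sum_sub_distrib]
      ring
    have : e q = γ * |∑ s' : S, T q.1 q.2 s' *
        ∑ a' : A, π s' a' * (Qhat (s', a') - Qpi (s', a'))| := by
      rw [he]; simp only []; rw [hdiff, abs_mul, abs_of_nonneg hγ0]
    rw [this]
    apply mul_le_mul_of_nonneg_left _ hγ0
    calc |∑ s' : S, T q.1 q.2 s' * ∑ a' : A, π s' a' * (Qhat (s', a') - Qpi (s', a'))|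
        ≤ ∑ s' : S, |T q.1 q.2 s' * ∑ a' : A, π s' a' * (Qhat (s', a') - Qpi (s', a'))| :=
          Finset.abs_sum_le_sum_abs _ _
      _ ≤ ∑ s' : S, T q.1 q.2 s' * M := by
          apply Finset.sum_le_sum
          intro s' _
          rw [abs_mul, abs_of_nonneg (hT0 _ _ _)]
          rcases eq_or_lt_of_le (hT0 q.1 q.2 s') with hT | hT
          · rw [← hT]; simp
          apply mul_le_mul_of_nonneg_left _ (le_of_lt hT)
          calc |∑ a' : A, π s' a' * (Qhat (s', a') - Qpi (s', a'))|
              ≤ ∑ a' : A, |π s' a' * (Qhat (s', a') - Qpi (s', a'))| :=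
                Finset.abs_sum_le_sum_abs _ _
            _ ≤ ∑ a' : A, π s' a' * M := by
                apply Finset.sum_le_sum
                intro a' _
                rw [abs_mul, abs_of_nonneg (hπ0 _ _)]
                rcases eq_or_lt_of_le (hπ0 s' a') with hπ | hπ
                · rw [← hπ]; simp
                apply mul_le_mul_of_nonneg_left _ (le_of_lt hπ)
                exact hm _ (Set.mem_toFinset.mpr (hclosed q hq s' a' hT hπ))
            _ = M := by rw [← Finset.sum_mul, hπ1, one_mul]
      _ = M := by rw [← Finset.sum_mul, hT1, one_mul]
  have hMle : M ≤ γ * M := key m hmD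
  have hM0' : M ≤ 0 := by nlinarith
  have hMzero : M = 0 := le_antisymm hM0' hM0
  have hep : e p ≤ 0 := by
    have := key p hp
    rw [hMzero] at this
    simpa using this
  have : |Qhat p - Qpi p| = 0 := le_antisymm hep (abs_nonneg _)
  have := abs_eq_zero.mp this
  linarith
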